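/- Let ε be a real number with 0 < ε < 1/2. Consider the four-state Markov chain with states {s₀, s₁, s₂, s₃}, initial state s₀, transition function δ(s₀) = (ε/2)·δ_{s₁} + (1−ε)·δ_{s₂} + (ε/2)·δ_{s₃}, and δ(sᵢ) = δ_{sᵢ} for i ∈ {1,2,3}. Then both {s₀, s₁, s₂} and {s₀, s₂, s₃} are minimal ε-cores of this chain, and they are distinct. In particular, for every ε with 0 < ε < 1/2 there exists an MDP with two distinct minimal ε-cores. -/

import Mathlib

open MeasureTheory

/-- A Markov chain: an initial state and a transition distribution for each state. -/
structure MC (S : Type*) where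
  init : S
  trans : S → PMF S

/-- The space of infinite paths `s₀ s₁ s₂ ⋯` of a Markov chain. -/
def MCTraj (S : Type*) := ℕ → S

instance {S : Type*} : MeasurableSpace (MCTraj S) :=
  @MeasurableSpace.pi ℕ (fun _ => S) (fun _ => ⊤)

variable {S : Type*}

/-- The probability that a path of the chain starting in state `s` begins with exactly the
finite sequence `pre` of states. -/
noncomputable def mcCylProb [DecidableEq S] (M : MC S) : S → List S → ENNReal
  | _, [] => 1
  | s, t :: rest =>
      (if t = s then 1 else 0) * ∑' s' : S, (M.trans s) s' * mcCylProb M s' rest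

/-- The cylinder set of all infinite paths whose first coordinates agree with `pre`. -/
def MCCyl (pre : List S) : Set (MCTraj S) :=
  {ω | ∀ i : Fin pre.length, ω i = pre.get i}

/-- `P` is the family of path measures of `M` induced (via the Ionescu–Tulcea construction)
by the start states: each `P s` is a probability measure on infinite paths starting in `s`
whose value on every cylinder is the product of the transition probabilities. -/
def IsMCPathMeasure [DecidableEq S] (M : MC S) (P : S → Measure (MCTraj S)) : Prop :=
  (∀ s, IsProbabilityMeasure (P s)) ∧ ∀ s pre, P s (MCCyl pre) = mcCylProb M s pre

/-- The set of paths that visit `R` at some point. -/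
def MCReach (R : Set S) : Set (MCTraj S) := {ω | ∃ i, ω i ∈ R}

/-- `C` is an `ε`-core of the chain: the probability of ever leaving `C` is `< ε`. -/
def IsMCCore [DecidableEq S] (M : MC S) (P : S → Measure (MCTraj S)) (ε : ℝ)
    (C : Set S) : Prop :=
  P M.init (MCReach Cᶜ) < ENNReal.ofReal ε

/-- `C` is a minimal `ε`-core: it is an `ε`-core and no proper subset of it is one. -/
def IsMinimalMCCore [DecidableEq S] (M : MC S) (P : S → Measure (MCTraj S)) (ε : ℝ)
    (C : Set S) : Prop :=
  IsMCCore M P ε C ∧ ∀ C' ⊂ C, ¬ IsMCCore M P ε C'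

/-- The four-state Markov chain with states `{s₀, s₁, s₂, s₃}` (encoded as `Fin 4`), initial
state `s₀ = 0`, `δ(s₀) = (ε/2)·δ_{s₁} + (1−ε)·δ_{s₂} + (ε/2)·δ_{s₃}`, and `s₁`, `s₂`, `s₃`
absorbing. -/
noncomputable def chain4 (ε : ℝ) (h1 : 0 < ε) (h2 : ε < 1 / 2) : MC (Fin 4) where
  init := 0
  trans := fun s =>
    if s = 0 then
      PMF.ofFintype
        ![0, ENNReal.ofReal (ε / 2), ENNReal.ofReal (1 - ε), ENNReal.ofReal (ε / 2)]
        (by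
          rw [Fin.sum_univ_four]
          simp only [Matrix.cons_val_zero, Matrix.cons_val_one, Matrix.head_cons,
            Matrix.cons_val_two, Matrix.tail_cons, Matrix.cons_val_three]
          rw [zero_add, ← ENNReal.ofReal_add (by linarith) (by linarith),
            ← ENNReal.ofReal_add (by linarith) (by linarith)]
          rw [show ε / 2 + (1 - ε) + ε / 2 = (1 : ℝ) by ring, ENNReal.ofReal_one])
    else PMF.pure s

lemma measurable_eval {S : Type*} (n : ℕ) :
    @Measurable (MCTraj S) S _ ⊤ (fun ω => ω n) :=
  @measurable_pi_apply ℕ (fun _ => S) (fun _ => ⊤) n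

lemma measurableSet_evalMem {S : Type*} (n : ℕ) (A : Set S) :
    MeasurableSet {ω : MCTraj S | ω n ∈ A} :=
  measurable_eval n (MeasurableSpace.measurableSet_top)

lemma measurableSet_MCCyl {S : Type*} (pre : List S) : MeasurableSet (MCCyl pre) := by
  have : MCCyl pre = ⋂ i : Fin pre.length, {ω : MCTraj S | ω (i : ℕ) ∈ ({pre.get i} : Set S)} := by
    ext ω; simp [MCCyl]
  rw [this]
  exact MeasurableSet.iInter fun i => measurableSet_evalMem _ _

lemma measurableSet_MCReach {S : Type*} (R : Set S) : MeasurableSet (MCReach R) := by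
  have : MCReach R = ⋃ n : ℕ, {ω : MCTraj S | ω n ∈ R} := by
    ext ω; simp [MCReach]
  rw [this]
  exact MeasurableSet.iUnion fun n => measurableSet_evalMem n R

lemma tsum_fin4 (f : Fin 4 → ENNReal) : ∑' s, f s = f 0 + f 1 + f 2 + f 3 := by
  rw [tsum_fintype, Fin.sum_univ_four]

variable {ε : ℝ} {h1 : 0 < ε} {h2 : ε < 1 / 2}

lemma chain4_trans_ne (s : Fin 4) (hs : s ≠ 0) :
    (chain4 ε h1 h2).trans s = PMF.pure s := by simp [chain4, hs]

lemma chain4_trans0 (c : Fin 4) :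
    (chain4 ε h1 h2).trans 0 c =
      ![0, ENNReal.ofReal (ε / 2), ENNReal.ofReal (1 - ε), ENNReal.ofReal (ε / 2)] c := by
  simp [chain4]

lemma cylProb_nil (s : Fin 4) : mcCylProb (chain4 ε h1 h2) s [] = 1 := rfl

lemma cylProb_cons (s t : Fin 4) (rest : List (Fin 4)) :
    mcCylProb (chain4 ε h1 h2) s (t :: rest) =
      (if t = s then 1 else 0) *
        ∑' s' : Fin 4, ((chain4 ε h1 h2).trans s) s' * mcCylProb (chain4 ε h1 h2) s' rest := rfl

lemma cylProb_abs (c : Fin 4) (hc : c ≠ 0) (n : ℕ) :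
    mcCylProb (chain4 ε h1 h2) c (List.replicate n c) = 1 := by
  induction n with
  | zero => rfl
  | succ n ih =>
    rw [List.replicate_succ, cylProb_cons, if_pos rfl, one_mul,
      chain4_trans_ne c hc, tsum_eq_single c]
    · rw [PMF.pure_apply, if_pos rfl, one_mul, ih]
    · intro b hb
      rw [PMF.pure_apply, if_neg hb, zero_mul]

lemma cylProb_main (c : Fin 4) (hc : c ≠ 0) (n : ℕ) :
    mcCylProb (chain4 ε h1 h2) 0 (0 :: List.replicate (n+1) c) =
      (chain4 ε h1 h2).trans 0 c := by
  rw [cylProb_cons, if_pos rfl, one_mul, tsum_eq_single c]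
  · rw [cylProb_abs c hc, mul_one]
  · intro b hb
    rw [List.replicate_succ, cylProb_cons, if_neg (Ne.symm hb), zero_mul, mul_zero]

lemma cylProb_zero : mcCylProb (chain4 ε h1 h2) 0 [0] = 1 := by
  rw [cylProb_cons, if_pos rfl, one_mul]
  simp only [cylProb_nil, mul_one]
  exact ((chain4 ε h1 h2).trans 0).tsum_coe

lemma mem_cyl_one {a : Fin 4} {ω : MCTraj (Fin 4)} :
    ω ∈ MCCyl [a] ↔ ω 0 = a := by
  constructor
  · intro h; exact h ⟨0, by norm_num⟩
  · intro h i
    match i with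
    | ⟨0, _⟩ => exact h

lemma mem_cyl_two {a b : Fin 4} {ω : MCTraj (Fin 4)} :
    ω ∈ MCCyl [a, b] ↔ ω 0 = a ∧ ω 1 = b := by
  constructor
  · intro h; exact ⟨h ⟨0, by norm_num⟩, h ⟨1, by norm_num⟩⟩
  · rintro ⟨h0, h1⟩ i
    match i with
    | ⟨0, _⟩ => exact h0
    | ⟨1, _⟩ => exact h1

lemma mem_cyl_rep {a c : Fin 4} {m : ℕ} {ω : MCTraj (Fin 4)} :
    ω ∈ MCCyl (a :: List.replicate m c) ↔ ω 0 = a ∧ ∀ j < m, ω (j + 1) = c := by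
  constructor
  · intro h
    refine ⟨h ⟨0, by simp⟩, fun j hj => ?_⟩
    have := h ⟨j + 1, by simpa using by omega⟩
    simpa [List.getElem_replicate] using this
  · rintro ⟨h0, hc⟩ i
    match i, i.isLt with
    | ⟨0, _⟩, _ => exact h0
    | ⟨j+1, hj⟩, _ =>
      have hj' : j < m := by simpa using hj
      simpa [List.getElem_replicate] using hc j hj'

lemma cylProb_pair (c : Fin 4) (hc : c ≠ 0) :
    mcCylProb (chain4 ε h1 h2) 0 [0, c] = (chain4 ε h1 h2).trans 0 c := by
  have := cylProb_main (ε := ε) (h1 := h1) (h2 := h2) c hc 0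
  simpa using this

lemma reach_single_le (ε : ℝ) (h1 : 0 < ε) (h2 : ε < 1 / 2)
    (P : Fin 4 → Measure (MCTraj (Fin 4)))
    (hP : IsMCPathMeasure (chain4 ε h1 h2) P) (x : Fin 4) (hx : x ≠ 0) :
    P 0 (MCReach {x}) ≤ (chain4 ε h1 h2).trans 0 x := by
  haveI := hP.1 0
  set M := chain4 ε h1 h2 with hM
  set U : ℕ → Set (MCTraj (Fin 4)) := fun n =>
    (MCCyl (0 :: List.replicate (n+1) 1) ∪ MCCyl (0 :: List.replicate (n+1) 2)) ∪
      MCCyl (0 :: List.replicate (n+1) 3) with hUdef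
  have hPc : ∀ (c : Fin 4), c ≠ 0 → ∀ n,
      P 0 (MCCyl (0 :: List.replicate (n+1) c)) = M.trans 0 c :=
    fun c hc n => by rw [hP.2 0, cylProb_main c hc n]
  have hone : ∀ (c : Fin 4) (n : ℕ) (ω : MCTraj (Fin 4)),
      ω ∈ MCCyl (0 :: List.replicate (n+1) c) → ω 1 = c :=
    fun c n ω hω => (mem_cyl_rep.mp hω).2 0 (Nat.succ_pos n)
  have hUmeas : ∀ n, MeasurableSet (U n) := fun n =>
    ((measurableSet_MCCyl _).union (measurableSet_MCCyl _)).union (measurableSet_MCCyl _)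
  have hdisj : ∀ (c c' : Fin 4) (n : ℕ), c ≠ c' →
      Disjoint (MCCyl (0 :: List.replicate (n+1) c)) (MCCyl (0 :: List.replicate (n+1) c')) := by
    intro c c' n hcc
    rw [Set.disjoint_left]
    intro ω hω1 hω2
    exact hcc ((hone c n ω hω1).symm.trans (hone c' n ω hω2))
  have hU1 : ∀ n, P 0 (U n) = 1 := by
    intro n
    rw [hUdef]
    rw [measure_union ((hdisj 1 3 n (by decide)).union_left (hdisj 2 3 n (by decide)))
        (measurableSet_MCCyl _),
      measure_union (hdisj 1 2 n (by decide)) (measurableSet_MCCyl _),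
      hPc 1 (by decide) n, hPc 2 (by decide) n, hPc 3 (by decide) n, hM,
      chain4_trans0, chain4_trans0, chain4_trans0]
    simp only [Matrix.cons_val_one, Matrix.head_cons, Matrix.cons_val_two, Matrix.tail_cons,
      Matrix.cons_val_three, Matrix.cons_val_zero]
    rw [← ENNReal.ofReal_add (by linarith) (by linarith),
      ← ENNReal.ofReal_add (by linarith) (by linarith),
      show ε / 2 + (1 - ε) + ε / 2 = (1 : ℝ) by ring, ENNReal.ofReal_one]
  have hBad : P 0 (⋃ n, (U n)ᶜ) = 0 := measure_iUnion_null fun n => by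
    rw [measure_compl (hUmeas n) (measure_ne_top _ _), hU1 n, measure_univ, tsub_self]
  have hsub : MCReach {x} ⊆ (⋃ n, (U n)ᶜ) ∪ MCCyl [0, x] := by
    intro ω hω
    by_cases hb : ω ∈ ⋃ n, (U n)ᶜ
    · exact Or.inl hb
    · right
      simp only [Set.mem_iUnion, Set.mem_compl_iff, not_exists, not_not] at hb
      obtain ⟨i, hi⟩ := hω
      have hi' : ω i = x := hi
      have hUi := hb i
      rw [hUdef] at hUi
      rcases hUi with (hc | hc) | hc <;>
      · obtain ⟨h0, hrep⟩ := mem_cyl_rep.mp hc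
        rcases Nat.eq_zero_or_pos i with rfl | hipos
        · exact absurd (hi'.symm.trans h0) hx
        · obtain ⟨j, rfl⟩ := Nat.exists_eq_succ_of_ne_zero (Nat.pos_iff_ne_zero.mp hipos)
          exact mem_cyl_two.mpr ⟨h0, by rw [hrep 0 (by omega), ← hrep j (by omega)]; exact hi'⟩
  calc P 0 (MCReach {x}) ≤ P 0 ((⋃ n, (U n)ᶜ) ∪ MCCyl [0, x]) := measure_mono hsub
    _ ≤ P 0 (⋃ n, (U n)ᶜ) + P 0 (MCCyl [0, x]) := measure_union_le _ _
    _ = M.trans 0 x := by rw [hBad, hP.2 0, cylProb_pair x hx, zero_add]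

lemma mem_MCReach {S : Type*} {R : Set S} {ω : MCTraj S} : ω ∈ MCReach R ↔ ∃ i, ω i ∈ R :=
  Iff.rfl

lemma notCore (ε : ℝ) (h1 : 0 < ε) (h2 : ε < 1 / 2)
    (P : Fin 4 → Measure (MCTraj (Fin 4)))
    (hP : IsMCPathMeasure (chain4 ε h1 h2) P) (C' : Set (Fin 4))
    (h : (0 : Fin 4) ∉ C' ∨ (2 : Fin 4) ∉ C' ∨ ((1 : Fin 4) ∉ C' ∧ (3 : Fin 4) ∉ C')) :
    ¬ IsMCCore (chain4 ε h1 h2) P ε C' := by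
  rw [IsMCCore, not_lt]
  show ENNReal.ofReal ε ≤ P 0 (MCReach C'ᶜ)
  rcases h with h | h | ⟨hm1, hm3⟩
  · calc ENNReal.ofReal ε ≤ 1 := ENNReal.ofReal_le_one.mpr (by linarith)
      _ = P 0 (MCCyl [0]) := by rw [hP.2 0, cylProb_zero]
      _ ≤ _ := measure_mono fun ω hω => mem_MCReach.mpr ⟨0, by rw [mem_cyl_one.mp hω]; exact h⟩
  · calc ENNReal.ofReal ε ≤ ENNReal.ofReal (1 - ε) := ENNReal.ofReal_le_ofReal (by linarith)
      _ = P 0 (MCCyl [0, 2]) := by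
          rw [hP.2 0, cylProb_pair 2 (by decide), chain4_trans0]
          simp
      _ ≤ _ := measure_mono fun ω hω => mem_MCReach.mpr ⟨1, by rw [(mem_cyl_two.mp hω).2]; exact h⟩
  · have hd : Disjoint (MCCyl [0, 1] : Set (MCTraj (Fin 4))) (MCCyl [0, 3]) := by
      rw [Set.disjoint_left]
      intro ω hω1 hω3
      have e1 := (mem_cyl_two.mp hω1).2
      have e3 := (mem_cyl_two.mp hω3).2
      rw [e1] at e3
      exact absurd e3 (by decide)
    calc ENNReal.ofReal ε = P 0 (MCCyl [0, 1] ∪ MCCyl [0, 3]) := by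
          rw [measure_union hd (measurableSet_MCCyl _), hP.2 0, hP.2 0,
            cylProb_pair 1 (by decide), cylProb_pair 3 (by decide),
            chain4_trans0, chain4_trans0]
          simp only [Matrix.cons_val_one, Matrix.head_cons, Matrix.cons_val_three,
            Matrix.tail_cons, Matrix.cons_val_zero]
          rw [← ENNReal.ofReal_add (by linarith) (by linarith),
            show ε / 2 + ε / 2 = ε by ring]
      _ ≤ _ := measure_mono fun ω hω => by
          rcases hω with hω | hω
          · exact mem_MCReach.mpr ⟨1, by rw [(mem_cyl_two.mp hω).2]; exact hm1⟩
          · exact mem_MCReach.mpr ⟨1, by rw [(mem_cyl_two.mp hω).2]; exact hm3⟩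

lemma isCore (ε : ℝ) (h1 : 0 < ε) (h2 : ε < 1 / 2)
    (P : Fin 4 → Measure (MCTraj (Fin 4)))
    (hP : IsMCPathMeasure (chain4 ε h1 h2) P) (x : Fin 4) (hx : x = 1 ∨ x = 3) :
    P 0 (MCReach {x}) < ENNReal.ofReal ε := by
  have hx0 : x ≠ 0 := by rcases hx with rfl | rfl <;> decide
  calc P 0 (MCReach {x}) ≤ (chain4 ε h1 h2).trans 0 x := reach_single_le ε h1 h2 P hP x hx0
    _ = ENNReal.ofReal (ε / 2) := by
        rw [chain4_trans0]
        rcases hx with rfl | rfl <;> simp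
    _ < ENNReal.ofReal ε := by
        rw [ENNReal.ofReal_lt_ofReal_iff h1]
        linarith

lemma chain4_minimal (ε : ℝ) (h1 : 0 < ε) (h2 : ε < 1 / 2)
    (P : Fin 4 → Measure (MCTraj (Fin 4)))
    (hP : IsMCPathMeasure (chain4 ε h1 h2) P) :
    IsMinimalMCCore (chain4 ε h1 h2) P ε ({0, 1, 2} : Set (Fin 4)) ∧
    IsMinimalMCCore (chain4 ε h1 h2) P ε ({0, 2, 3} : Set (Fin 4)) := by
  have hc1 : ({0, 1, 2} : Set (Fin 4))ᶜ = {3} := by ext y; fin_cases y <;> simp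
  have hc2 : ({0, 2, 3} : Set (Fin 4))ᶜ = {1} := by ext y; fin_cases y <;> simp
  constructor
  · constructor
    · show P (chain4 ε h1 h2).init (MCReach _) < _
      rw [show (chain4 ε h1 h2).init = 0 from rfl, hc1]
      exact isCore ε h1 h2 P hP 3 (Or.inr rfl)
    · intro C' hC'
      obtain ⟨x, hxC, hxC'⟩ := Set.exists_of_ssubset hC'
      apply notCore ε h1 h2 P hP
      simp only [Set.mem_insert_iff, Set.mem_singleton_iff] at hxC
      rcases hxC with rfl | rfl | rfl
      · exact Or.inl hxC'
      · exact Or.inr (Or.inr ⟨hxC', fun h3 => absurd (hC'.1 h3) (by simp)⟩)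
      · exact Or.inr (Or.inl hxC')
  · constructor
    · show P (chain4 ε h1 h2).init (MCReach _) < _
      rw [show (chain4 ε h1 h2).init = 0 from rfl, hc2]
      exact isCore ε h1 h2 P hP 1 (Or.inl rfl)
    · intro C' hC'
      obtain ⟨x, hxC, hxC'⟩ := Set.exists_of_ssubset hC'
      apply notCore ε h1 h2 P hP
      simp only [Set.mem_insert_iff, Set.mem_singleton_iff] at hxC
      rcases hxC with rfl | rfl | rfl
      · exact Or.inl hxC'
      · exact Or.inr (Or.inl hxC')
      · exact Or.inr (Or.inr ⟨fun h3 => absurd (hC'.1 h3) (by simp), hxC'⟩)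

lemma sets_ne : ({0, 1, 2} : Set (Fin 4)) ≠ ({0, 2, 3} : Set (Fin 4)) := by
  intro h
  have : (1 : Fin 4) ∈ ({0, 2, 3} : Set (Fin 4)) := h ▸ (by simp)
  simp at this

/-- For `0 < ε < 1/2`, in the chain `chain4 ε` both `{s₀, s₁, s₂}` and
`{s₀, s₂, s₃}` are minimal `ε`-cores, and they are distinct. In particular, for every such
`ε` there exists a (Markov-chain) MDP with two distinct minimal `ε`-cores. -/
theorem minimal_cores_not_unique (ε : ℝ) (h1 : 0 < ε) (h2 : ε < 1 / 2)
    (P : Fin 4 → Measure (MCTraj (Fin 4)))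
    (hP : IsMCPathMeasure (chain4 ε h1 h2) P) :
    IsMinimalMCCore (chain4 ε h1 h2) P ε ({0, 1, 2} : Set (Fin 4)) ∧
    IsMinimalMCCore (chain4 ε h1 h2) P ε ({0, 2, 3} : Set (Fin 4)) ∧
    ({0, 1, 2} : Set (Fin 4)) ≠ ({0, 2, 3} : Set (Fin 4)) ∧
    ∀ ε' : ℝ, 0 < ε' → ε' < 1 / 2 →
      ∃ M : MC (Fin 4), ∀ P' : Fin 4 → Measure (MCTraj (Fin 4)),
        IsMCPathMeasure M P' →
          ∃ C C' : Set (Fin 4), C ≠ C' ∧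
            IsMinimalMCCore M P' ε' C ∧ IsMinimalMCCore M P' ε' C' := by
  obtain ⟨k1, k2⟩ := chain4_minimal ε h1 h2 P hP
  refine ⟨k1, k2, sets_ne, fun ε' h1' h2' => ⟨chain4 ε' h1' h2', fun P' hP' => ?_⟩⟩
  obtain ⟨m1, m2⟩ := chain4_minimal ε' h1' h2' P' hP'
  exact ⟨_, _, sets_ne, m1, m2⟩
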